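/- Let A be a uniform algebra on X, φ a character of A, and let E ⊆ X be a closed set containing the supports of all representing measures of φ, with E equal to the closure of the union of those supports. Suppose f ∈ A_E := {g ∈ C(X) : g|E ∈ closure(A|E)} is real-valued on E. If f is constant on the support of every representing measure of φ, then f is constant on E. -/

import Mathlib

open MeasureTheory

variable {X : Type} [TopologicalSpace X] [CompactSpace X] [T2Space X]
  [MeasurableSpace X] [BorelSpace X]

/-- The closed support of a measure. -/
def msupp (μ : Measure X) : Set X :=
  {x : X | ∀ U : Set X, IsOpen U → x ∈ U → μ U ≠ 0}

set_option linter.unusedSectionVars false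

lemma isOpen_compl_msupp (μ : Measure X) : IsOpen (msupp μ)ᶜ := by
  rw [isOpen_iff_forall_mem_open]
  intro x hx
  simp only [msupp, Set.mem_compl_iff, Set.mem_setOf_eq, not_forall] at hx
  obtain ⟨U, hU, hxU, hU0⟩ := hx
  rw [not_not] at hU0
  refine ⟨U, fun y hy => ?_, hU, hxU⟩
  simp only [msupp, Set.mem_compl_iff, Set.mem_setOf_eq, not_forall]
  exact ⟨U, hU, hy, not_not.mpr hU0⟩

lemma msupp_compl_null (μ : Measure X) (hreg : μ.Regular) : μ (msupp μ)ᶜ = 0 := by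
  by_contra h
  have hpos : (0 : ENNReal) < μ (msupp μ)ᶜ := pos_iff_ne_zero.mpr h
  obtain ⟨K, hKsub, hKc, hKpos⟩ := hreg.innerRegular (isOpen_compl_msupp μ) 0 hpos
  -- cover K by null open sets
  have hcov : ∀ x : K, ∃ U : Set X, IsOpen U ∧ (x : X) ∈ U ∧ μ U = 0 := by
    intro ⟨x, hx⟩
    have := hKsub hx
    simp only [msupp, Set.mem_compl_iff, Set.mem_setOf_eq, not_forall] at this
    obtain ⟨U, hU, hxU, hU0⟩ := this
    exact ⟨U, hU, hxU, not_not.mp hU0⟩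
  choose U hUo hUx hU0 using hcov
  obtain ⟨t, ht⟩ := hKc.elim_finite_subcover U hUo (fun x hx => Set.mem_iUnion.mpr ⟨⟨x, hx⟩, hUx _⟩)
  have : μ K = 0 := by
    refine measure_mono_null ht ?_
    exact (measure_biUnion_null_iff t.countable_toSet).mpr fun i _ => hU0 i
  simp [this] at hKpos

/-- `μ` is a representing measure for the character `φ` of `A`: a regular Borel
probability measure with `φ f = ∫ f dμ` for all `f ∈ A`. -/
def IsRepMeasure (A : Subalgebra ℂ C(X, ℂ)) (φ : A →ₐ[ℂ] ℂ) (μ : Measure X) : Prop :=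
  IsProbabilityMeasure μ ∧ μ.Regular ∧ ∀ f : A, φ f = ∫ x, (f : C(X, ℂ)) x ∂μ

lemma tendsto_integral_aux (E : Set X) (hEc : IsClosed E) (f : C(X, ℂ))
    (g : ℕ → C(X, ℂ))
    (hg : Filter.Tendsto (fun n => (g n).restrict E) Filter.atTop (nhds (f.restrict E)))
    (μ : Measure X) (hprob : IsProbabilityMeasure μ) (hreg : μ.Regular)
    (hsub : msupp μ ⊆ E) :
    Filter.Tendsto (fun n => ∫ x, g n x ∂μ) Filter.atTop (nhds (∫ x, f x ∂μ)) := by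
  haveI : CompactSpace E := isCompact_iff_compactSpace.mp hEc.isCompact
  rw [tendsto_iff_dist_tendsto_zero]
  have hd : Filter.Tendsto (fun n => dist ((g n).restrict E) (f.restrict E))
      Filter.atTop (nhds 0) := tendsto_iff_dist_tendsto_zero.mp hg
  refine squeeze_zero (fun n => dist_nonneg) (fun n => ?_) hd
  have hint : ∀ h : C(X, ℂ), Integrable (fun x => h x) μ := fun h =>
    h.continuous.integrable_of_hasCompactSupport
      (HasCompactSupport.of_compactSpace _) |>.mono_measure le_rfl
  rw [dist_eq_norm, ← integral_sub (hint (g n)) (hint f)]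
  have := norm_integral_le_of_norm_le_const (μ := μ)
    (C := dist ((g n).restrict E) (f.restrict E))
    (f := fun x => g n x - f x) ?_
  · simpa [measure_univ] using this
  · rw [ae_iff]
    refine measure_mono_null (fun x hx => ?_) (msupp_compl_null μ hreg)
    simp only [Set.mem_setOf_eq, not_le] at hx
    intro hxs
    have hxE : x ∈ E := hsub hxs
    have : ‖g n x - f x‖ ≤ dist ((g n).restrict E) (f.restrict E) := by
      have := ContinuousMap.dist_apply_le_dist (f := (g n).restrict E)
        (g := f.restrict E) ⟨x, hxE⟩
      simpa [dist_eq_norm, ContinuousMap.restrict] using this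
    exact absurd this (not_le.mpr hx)

set_option synthInstance.maxHeartbeats 1000000 in
lemma rep_integral_eq (A : Subalgebra ℂ C(X, ℂ)) (φ : A →ₐ[ℂ] ℂ)
    (E : Set X) (hE : E = closure (⋃ μ ∈ {μ : Measure X | IsRepMeasure A φ μ}, msupp μ))
    (f : C(X, ℂ))
    (hfAE : f.restrict E ∈
      closure ((fun g : C(X, ℂ) => g.restrict E) '' (A : Set C(X, ℂ))))
    (μ ν : Measure X) (hμ : IsRepMeasure A φ μ) (hν : IsRepMeasure A φ ν) :
    ∫ x, f x ∂μ = ∫ x, f x ∂ν := by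
  have hEc : IsClosed E := hE ▸ isClosed_closure
  haveI : CompactSpace E := isCompact_iff_compactSpace.mp hEc.isCompact
  have hsub : ∀ ρ : Measure X, IsRepMeasure A φ ρ → msupp ρ ⊆ E := fun ρ hρ x hx => by
    rw [hE]
    exact subset_closure (Set.mem_biUnion hρ hx)
  obtain ⟨s, hsmem, hslim⟩ := mem_closure_iff_seq_limit.mp hfAE
  choose g hgA hgr using hsmem
  have hslim' : Filter.Tendsto (fun n => (g n).restrict E) Filter.atTop
      (nhds (f.restrict E)) := by
    simpa [hgr] using hslim
  have h1 := tendsto_integral_aux E hEc f g hslim' μ hμ.1 hμ.2.1 (hsub μ hμ)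
  have h2 := tendsto_integral_aux E hEc f g hslim' ν hν.1 hν.2.1 (hsub ν hν)
  have heq : ∀ n, ∫ x, g n x ∂μ = ∫ x, g n x ∂ν := fun n => by
    rw [← hμ.2.2 ⟨g n, hgA n⟩, ← hν.2.2 ⟨g n, hgA n⟩]
  rw [Filter.tendsto_congr heq] at h1
  exact tendsto_nhds_unique h1 h2

/-- Let `E` be the closure of the union of the supports of all representing measures of
a character `φ`. If `f ∈ A_E` is real-valued on `E` and constant on the support of every
representing measure of `φ`, then `f` is constant on `E`. -/
theorem stmt_12 (A : Subalgebra ℂ C(X, ℂ))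
    (hclosed : IsClosed (A : Set C(X, ℂ)))
    (hsep : ∀ x y : X, x ≠ y → ∃ f ∈ A, f x ≠ f y)
    (φ : A →ₐ[ℂ] ℂ)
    (E : Set X)
    (hE : E = closure (⋃ μ ∈ {μ : Measure X | IsRepMeasure A φ μ}, msupp μ))
    (f : C(X, ℂ))
    (hfAE : f.restrict E ∈
      closure ((fun g : C(X, ℂ) => g.restrict E) '' (A : Set C(X, ℂ))))
    (hreal : ∀ x ∈ E, (f x).im = 0)
    (hconst : ∀ μ : Measure X, IsRepMeasure A φ μ → ∃ c : ℂ, ∀ x ∈ msupp μ, f x = c) :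
    ∃ c : ℂ, ∀ x ∈ E, f x = c := by
  by_cases h : ∃ μ : Measure X, IsRepMeasure A φ μ
  · obtain ⟨μ₀, h₀⟩ := h
    refine ⟨∫ x, f x ∂μ₀, ?_⟩
    have key : closure (⋃ μ ∈ {μ : Measure X | IsRepMeasure A φ μ}, msupp μ) ⊆
        {x | f x = ∫ x, f x ∂μ₀} := by
      refine closure_minimal ?_ (isClosed_eq f.continuous continuous_const)
      intro x hx
      obtain ⟨μ, hμ, hxμ⟩ := Set.mem_iUnion₂.mp hx
      obtain ⟨c, hc⟩ := hconst μ hμ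
      haveI := hμ.1
      have hae : (fun x => f x) =ᵐ[μ] fun _ => c := by
        rw [Filter.EventuallyEq, ae_iff]
        refine measure_mono_null (fun y hy hys => hy (hc y hys)) (msupp_compl_null μ hμ.2.1)
      have hcμ : ∫ x, f x ∂μ = c := by
        rw [integral_congr_ae hae, integral_const]
        simp
      have := rep_integral_eq A φ E hE f hfAE μ μ₀ hμ h₀
      simp only [Set.mem_setOf_eq]
      rw [hc x hxμ, ← hcμ, this]
    intro x hx
    exact key (hE ▸ hx)
  · refine ⟨0, fun x hx => absurd hx ?_⟩
    rw [hE]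
    have he : (⋃ μ ∈ {μ : Measure X | IsRepMeasure A φ μ}, msupp μ) = (∅ : Set X) := by
      ext y
      simp only [Set.mem_iUnion, Set.mem_setOf_eq, Set.mem_empty_iff_false, iff_false,
        not_exists]
      exact fun μ hμ _ => h ⟨μ, hμ⟩
    rw [he, closure_empty]
    exact Set.notMem_empty x
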